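/- There exist a constant c > 0 and an integer n₀ such that for every n ≥ n₀ there exists a DFA with n states and a subset S of its state set such that S is synchronized by some word and the shortest word synchronizing S has length at least c · 2^n / √n; moreover the DFA can be chosen so that at most 2 of its states are sink states and it is transitive on the remaining states. -/

import Mathlib

/-- Action of a DFA transition function on a subset of states along a word. -/
def dfaRun {n m : ℕ} (δ : Fin n → Fin m → Fin n) :
    Finset (Fin n) → List (Fin m) → Finset (Fin n)
  | S, [] => S
  | S, a :: w => dfaRun δ (S.image fun q => δ q a) w

/-- A word `w` synchronizes the subset `S` in the DFA `δ`. -/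
def dfaSync {n m : ℕ} (δ : Fin n → Fin m → Fin n) (S : Finset (Fin n))
    (w : List (Fin m)) : Prop :=
  (dfaRun δ S w).card = 1

/-- `q` is a sink state of the DFA `δ`. -/
def dfaSink {n m : ℕ} (δ : Fin n → Fin m → Fin n) (q : Fin n) : Prop :=
  ∀ a, δ q a = q

instance {n m : ℕ} (δ : Fin n → Fin m → Fin n) : DecidablePred (dfaSink δ) :=
  fun _ => inferInstanceAs (Decidable (∀ _, _))

lemma dfaRun_nil {n m : ℕ} (δ : Fin n → Fin m → Fin n) (S : Finset (Fin n)) :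
    dfaRun δ S [] = S := rfl

lemma dfaRun_cons {n m : ℕ} (δ : Fin n → Fin m → Fin n) (S : Finset (Fin n))
    (a : Fin m) (w : List (Fin m)) :
    dfaRun δ S (a :: w) = dfaRun δ (S.image fun q => δ q a) w := rfl

namespace S9
noncomputable section

lemma mod_cases {a m : ℕ} (h : a < 2*m) :
    a % m = if a < m then a else a - m := by
  split
  · exact Nat.mod_eq_of_lt ‹_›
  · rw [Nat.mod_eq_sub_mod (by omega)]
    exact Nat.mod_eq_of_lt (by omega)

variable (p : ℕ)

abbrev M : ℕ := p + 6
abbrev K : ℕ := (p + 6) / 2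

lemma Mpos : 0 < M p := by show 0 < p + 6; omega
lemma K_facts : 3 ≤ K p ∧ 2 * K p ≤ M p ∧ K p < M p := by
  show 3 ≤ (p+6)/2 ∧ 2 * ((p+6)/2) ≤ p + 6 ∧ (p+6)/2 < p + 6
  omega

lemma K_lb : p + 5 ≤ 2 * K p := by
  show p + 5 ≤ 2 * ((p+6)/2)
  omega

lemma K_ub : K p ≤ p + 8 := by
  show (p+6)/2 ≤ p + 8
  omega

def stA : Fin (p+8) := ⟨p+6, by omega⟩
def stB : Fin (p+8) := ⟨p+7, by omega⟩
def toSt (q : Fin (M p)) : Fin (p+8) := ⟨q.val, by have h : q.val < p + 6 := q.isLt; omega⟩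

lemma toSt_inj : Function.Injective (toSt p) := by
  intro a b h
  apply Fin.ext
  simpa [toSt] using congrArg Fin.val h

def rot (q : Fin (M p)) : Fin (M p) := ⟨(q.val + 1) % (M p), Nat.mod_lt _ (Mpos p)⟩

def C (i : Fin (M p)) : Finset (Fin (M p)) :=
  (Finset.range (K p)).image (fun t => ⟨(i.val + t) % (M p), Nat.mod_lt _ (Mpos p)⟩)

lemma mem_C {x i : Fin (M p)} : x ∈ C p i ↔ (x.val + M p - i.val) % M p < K p := by
  obtain ⟨hK3, hKM2, hKM⟩ := K_facts p
  have hi := i.isLt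
  have hx := x.isLt
  constructor
  · intro hmem
    simp only [C, Finset.mem_image, Finset.mem_range] at hmem
    obtain ⟨t, ht, rfl⟩ := hmem
    simp only
    have h1 : (i.val + t) % M p = if i.val + t < M p then i.val + t else i.val + t - M p :=
      mod_cases (by omega)
    split at h1 <;>
    · rw [h1]
      rw [mod_cases (a := _) (by omega)]
      split <;> omega
  · intro ht
    simp only [C, Finset.mem_image, Finset.mem_range]
    refine ⟨(x.val + M p - i.val) % M p, ht, ?_⟩
    apply Fin.ext
    simp only
    rw [mod_cases (a := x.val + M p - i.val) (by omega)]
    split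
    · rw [mod_cases (by omega)]; split <;> omega
    · rw [mod_cases (by omega)]; split <;> omega

lemma card_C (i : Fin (M p)) : (C p i).card = K p := by
  obtain ⟨hK3, hKM2, hKM⟩ := K_facts p
  have hi := i.isLt
  rw [C, Finset.card_image_of_injOn, Finset.card_range]
  intro a ha b hb hab
  simp only [Finset.mem_coe, Finset.mem_range] at ha hb
  have h := congrArg Fin.val hab
  simp only at h
  rw [mod_cases (by omega), mod_cases (by omega)] at h
  split at h <;> split at h <;> omega

lemma mem_C_self (i : Fin (S9.M p)) : i ∈ C p i := by
  obtain ⟨hK3, hKM2, hKM⟩ := K_facts p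
  have hi := i.isLt
  rw [mem_C]
  rw [mod_cases (by omega)]
  split <;> omega

lemma C_inj : Function.Injective (C p) := by
  obtain ⟨hK3, hKM2, hKM⟩ := K_facts p
  intro i j h
  have hi := i.isLt
  have hj := j.isLt
  have h1 : i ∈ C p j := by rw [← h]; exact mem_C_self p i
  have h2 : j ∈ C p i := by rw [h]; exact mem_C_self p j
  rw [mem_C] at h1 h2
  rw [mod_cases (by omega)] at h1
  rw [mod_cases (by omega)] at h2
  apply Fin.ext
  split at h1 <;> split at h2 <;> omega

lemma rot_image_C (i : Fin (M p)) : (C p i).image (rot p) = C p (rot p i) := by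
  simp only [C, Finset.image_image]
  apply Finset.image_congr
  intro t ht
  apply Fin.ext
  simp only [Function.comp, rot]
  rw [Nat.mod_add_mod, Nat.mod_add_mod]
  ring_nf


/-! ### enumeration of k-subsets -/

def intervalsList : List (Finset (Fin (M p))) := (List.finRange (M p)).map (C p)

def restList : List (Finset (Fin (M p))) :=
  ((Finset.powersetCard (K p) Finset.univ) \ (intervalsList p).toFinset).toList

def confList : List (Finset (Fin (M p))) := intervalsList p ++ restList p

abbrev L : ℕ := (confList p).length

lemma length_intervalsList : (intervalsList p).length = M p := by
  simp [intervalsList]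

lemma M_le_L : M p ≤ L p := by
  show M p ≤ (confList p).length
  rw [confList, List.length_append, length_intervalsList]
  omega

lemma nodup_confList : (confList p).Nodup := by
  rw [confList, List.nodup_append]
  refine ⟨?_, Finset.nodup_toList _, ?_⟩
  · exact (List.nodup_finRange _).map (C_inj p)
  · intro x hx y hx2 hxy
    subst hxy
    rw [restList, Finset.mem_toList, Finset.mem_sdiff] at hx2
    exact hx2.2 (List.mem_toFinset.2 hx)

lemma card_of_mem_confList {X : Finset (Fin (M p))} (h : X ∈ confList p) :
    X.card = K p := by
  rw [confList, List.mem_append] at h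
  rcases h with h | h
  · rw [intervalsList, List.mem_map] at h
    obtain ⟨i, _, rfl⟩ := h
    exact card_C p i
  · rw [restList, Finset.mem_toList, Finset.mem_sdiff, Finset.mem_powersetCard] at h
    exact h.1.2

lemma choose_le_L : Nat.choose (M p) (K p) ≤ L p := by
  have hsub : Finset.powersetCard (K p) (Finset.univ : Finset (Fin (M p)))
      ⊆ (confList p).toFinset := by
    intro X hX
    rw [List.mem_toFinset, confList, List.mem_append]
    by_cases hi : X ∈ (intervalsList p).toFinset
    · exact Or.inl (List.mem_toFinset.1 hi)
    · right
      rw [restList, Finset.mem_toList, Finset.mem_sdiff]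
      exact ⟨hX, hi⟩
  calc Nat.choose (M p) (K p)
      = (Finset.powersetCard (K p) (Finset.univ : Finset (Fin (M p)))).card := by
        rw [Finset.card_powersetCard, Finset.card_univ, Fintype.card_fin]
    _ ≤ (confList p).toFinset.card := Finset.card_le_card hsub
    _ ≤ (confList p).length := List.toFinset_card_le _

def T (j : ℕ) : Finset (Fin (M p)) := (confList p).getD j ∅

lemma T_card {j : ℕ} (h : j < L p) : (T p j).card = K p := by
  rw [T, List.getD_eq_getElem _ _ h]
  exact card_of_mem_confList p (List.getElem_mem _)

lemma T_inj {i j : ℕ} (hi : i < L p) (hj : j < L p) (h : T p i = T p j) : i = j := by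
  rw [T, T, List.getD_eq_getElem _ _ hi, List.getD_eq_getElem _ _ hj] at h
  have := List.nodup_iff_injective_get.1 (nodup_confList p)
    (a₁ := ⟨i, hi⟩) (a₂ := ⟨j, hj⟩) (by simpa using h)
  simpa using congrArg Fin.val this

lemma T_small {j : ℕ} (h : j < M p) : T p j = C p ⟨j, h⟩ := by
  have h2 : j < L p := lt_of_lt_of_le h (M_le_L p)
  rw [T, List.getD_eq_getElem _ _ h2]
  simp only [confList]
  rw [List.getElem_append_left (by rw [length_intervalsList]; exact h)]
  simp [intervalsList]

/-! ### the step bijections -/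

def g (j : ℕ) : Fin (M p) → Fin (M p) := fun q =>
  if h : q ∈ T p j ∧ (T p j).card = (T p (j+1)).card then
    ((Finset.equivOfCardEq h.2) ⟨q, h.1⟩ : { x // x ∈ T p (j+1) }).val
  else q

lemma g_eq {j : ℕ} (hc : (T p j).card = (T p (j+1)).card) {q : Fin (M p)}
    (hq : q ∈ T p j) :
    g p j q = ((Finset.equivOfCardEq hc) ⟨q, hq⟩ : { x // x ∈ T p (j+1) }).val := by
  simp only [g, dif_pos (And.intro hq hc)]

lemma g_image {j : ℕ} (h : j + 1 < L p) : (T p j).image (g p j) = T p (j+1) := by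
  have hc : (T p j).card = (T p (j+1)).card := by
    rw [T_card p (by omega), T_card p h]
  apply Finset.eq_of_subset_of_card_le
  · intro x hx
    rw [Finset.mem_image] at hx
    obtain ⟨q, hq, rfl⟩ := hx
    rw [g_eq p hc hq]
    exact ((Finset.equivOfCardEq hc) ⟨q, hq⟩).2
  · rw [Finset.card_image_of_injOn, ← hc]
    intro a ha b hb hab
    rw [Finset.mem_coe] at ha hb
    rw [g_eq p hc ha, g_eq p hc hb] at hab
    have := (Finset.equivOfCardEq hc).injective (Subtype.ext hab)
    simpa using congrArg Subtype.val this

/-! ### the automaton -/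

abbrev Ltot : ℕ := L p + M p + 1

def act (ℓ : ℕ) (s : Fin (p+8)) : Fin (p+8) :=
  if hs : s.val < M p then
    let q : Fin (M p) := ⟨s.val, hs⟩
    if ℓ < L p then
      if ℓ + 1 < L p ∧ q ∈ T p ℓ then toSt p (g p ℓ q) else stA p
    else if hℓ : ℓ < L p + M p then
      if q ∈ C p ⟨ℓ - L p, by have := Mpos p; omega⟩ then toSt p (rot p q) else stA p
    else
      if q ∈ T p (L p - 1) then stB p else stA p
  else s

def δ : Fin (p+8) → Fin (Ltot p) → Fin (p+8) := fun s a => act p a.val s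

lemma act_stA (ℓ : ℕ) : act p ℓ (stA p) = stA p := by
  rw [act, dif_neg]
  show ¬ (p + 6 < p + 6)
  omega

lemma act_stB (ℓ : ℕ) : act p ℓ (stB p) = stB p := by
  rw [act, dif_neg]
  show ¬ (p + 7 < p + 6)
  omega

lemma act_toSt (ℓ : ℕ) (q : Fin (M p)) :
    act p ℓ (toSt p q) =
    (if ℓ < L p then
      if ℓ + 1 < L p ∧ q ∈ T p ℓ then toSt p (g p ℓ q) else stA p
    else if hℓ : ℓ < L p + M p then
      if q ∈ C p ⟨ℓ - L p, by have := Mpos p; omega⟩ then toSt p (rot p q) else stA p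
    else
      if q ∈ T p (L p - 1) then stB p else stA p) := by
  have hq : (toSt p q).val < M p := q.isLt
  rw [act, dif_pos hq]
  have : (⟨(toSt p q).val, hq⟩ : Fin (M p)) = q := by
    apply Fin.ext; rfl
  simp only [this]


/-! ### configurations -/

def V (j : ℕ) : Finset (Fin (p+8)) := (T p j).image (toSt p) ∪ {stB p}

lemma stA_ne_stB : stA p ≠ stB p := by
  intro h
  have := congrArg Fin.val h
  simp [stA, stB] at this

lemma stB_not_mem_image {s : Finset (Fin (M p))} : stB p ∉ s.image (toSt p) := by
  rw [Finset.mem_image]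
  rintro ⟨q, _, hq⟩
  have := congrArg Fin.val hq
  have h2 : q.val < p + 6 := q.isLt
  simp only [toSt, stB] at this
  omega

lemma stA_not_mem_image {s : Finset (Fin (M p))} : stA p ∉ s.image (toSt p) := by
  rw [Finset.mem_image]
  rintro ⟨q, _, hq⟩
  have := congrArg Fin.val hq
  have h2 : q.val < p + 6 := q.isLt
  simp only [toSt, stA] at this
  omega

lemma card_V {j : ℕ} (h : j < L p) : (V p j).card = K p + 1 := by
  rw [V, Finset.card_union_of_disjoint (Finset.disjoint_singleton_right.2
    (stB_not_mem_image p))]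
  rw [Finset.card_image_of_injective _ (toSt_inj p), T_card p h, Finset.card_singleton]

lemma image_V (ℓ j : ℕ) :
    (V p j).image (act p ℓ) = (T p j).image (act p ℓ ∘ toSt p) ∪ {stB p} := by
  rw [V, Finset.image_union, Finset.image_singleton, act_stB, Finset.image_image]

lemma V_step_path {j : ℕ} (h : j + 1 < L p) :
    (V p j).image (act p j) = V p (j+1) := by
  rw [image_V, V]
  congr 1
  rw [← g_image p h, Finset.image_image]
  apply Finset.image_congr
  intro q hq
  rw [Finset.mem_coe] at hq
  simp only [Function.comp]
  rw [act_toSt, if_pos (by omega : j < L p), if_pos ⟨h, hq⟩]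

lemma V_step_rot {j : ℕ} {i : Fin (M p)} (hj : j < L p) (hT : T p j = C p i) :
    (V p j).image (act p (L p + i.val)) = V p ((i.val + 1) % M p) := by
  have hi : i.val < M p := i.isLt
  rw [image_V, V]
  congr 1
  have hj' : (i.val + 1) % M p < M p := Nat.mod_lt _ (Mpos p)
  have hT' : T p ((i.val + 1) % M p) = C p (rot p i) := by
    rw [T_small p hj']
    congr 1
  rw [hT', ← rot_image_C, Finset.image_image, hT]
  apply Finset.image_congr
  intro q hq
  rw [Finset.mem_coe] at hq
  simp only [Function.comp]
  rw [act_toSt, if_neg (by omega : ¬ (L p + i.val < L p)),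
    dif_pos (by omega : L p + i.val < L p + M p)]
  rw [if_pos]
  convert hq using 2
  apply Fin.ext
  show L p + i.val - L p = i.val
  omega

lemma V_step_merge :
    (V p (L p - 1)).image (act p (L p + M p)) = {stB p} := by
  have hL : 0 < L p := lt_of_lt_of_le (Mpos p) (M_le_L p)
  rw [image_V]
  have hne : (T p (L p - 1)).Nonempty := by
    rw [← Finset.card_pos, T_card p (by omega)]
    have := (K_facts p).1
    omega
  have heq : ∀ q ∈ T p (L p - 1), (act p (L p + M p) ∘ toSt p) q = stB p := by
    intro q hq
    simp only [Function.comp]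
    rw [act_toSt, if_neg (by omega : ¬ (L p + M p < L p)),
      dif_neg (by omega : ¬ (L p + M p < L p + M p)), if_pos hq]
  have himg : (T p (L p - 1)).image (act p (L p + M p) ∘ toSt p) = {stB p} := by
    rw [Finset.image_congr (fun q hq => heq q hq), Finset.image_const hne]
  rw [himg, Finset.union_idempotent]

/-- helper to find an element of s not in t -/
lemma exists_not_mem {α : Type*} [DecidableEq α] {s t : Finset α}
    (hcard : t.card ≤ s.card) (hne : s ≠ t) : ∃ q ∈ s, q ∉ t := by
  by_contra h
  push_neg at h
  exact hne (Finset.eq_of_subset_of_card_le h hcard)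

lemma dead_mem {j ℓ : ℕ} {q : Fin (M p)} (hq : q ∈ T p j)
    (ha : act p ℓ (toSt p q) = stA p) :
    stA p ∈ (V p j).image (act p ℓ) ∧ stB p ∈ (V p j).image (act p ℓ) := by
  have h1 : toSt p q ∈ V p j := by
    rw [V]
    exact Finset.mem_union_left _ (Finset.mem_image_of_mem _ hq)
  have h2 : stB p ∈ V p j := by
    rw [V]
    exact Finset.mem_union_right _ (by simp)
  constructor
  · rw [← ha]
    exact Finset.mem_image_of_mem _ h1
  · rw [← act_stB p ℓ]
    exact Finset.mem_image_of_mem _ h2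


/-! ### death -/

lemma dead_run : ∀ (w : List (Fin (Ltot p))) (U : Finset (Fin (p+8))),
    stA p ∈ U → stB p ∈ U → ¬ dfaSync (δ p) U w := by
  intro w
  induction w with
  | nil =>
    intro U hA hB hs
    simp only [dfaSync, dfaRun] at hs
    obtain ⟨x, hx⟩ := Finset.card_eq_one.1 hs
    rw [hx, Finset.mem_singleton] at hA hB
    exact stA_ne_stB p (hA.trans hB.symm)
  | cons a w ih =>
    intro U hA hB hs
    rw [dfaSync, dfaRun] at hs
    refine ih _ ?_ ?_ hs
    · have : δ p (stA p) a = stA p := act_stA p _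
      rw [← this]
      exact Finset.mem_image_of_mem _ hA
    · have : δ p (stB p) a = stB p := act_stB p _
      rw [← this]
      exact Finset.mem_image_of_mem _ hB

/-! ### dead case witnesses -/

lemma witness_path {j ℓ : ℕ} (hj : j < L p) (h1 : ℓ < L p) (h2 : ¬ (ℓ = j ∧ j + 1 < L p)) :
    ∃ q ∈ T p j, act p ℓ (toSt p q) = stA p := by
  by_cases h3 : ℓ = j
  · subst h3
    have hne : (T p ℓ).Nonempty := by
      rw [← Finset.card_pos, T_card p h1]
      have := (K_facts p).1
      omega
    obtain ⟨q, hq⟩ := hne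
    refine ⟨q, hq, ?_⟩
    rw [act_toSt, if_pos h1, if_neg (fun hc => h2 ⟨rfl, hc.1⟩)]
  · have hne : T p j ≠ T p ℓ := fun h => h3 (T_inj p h1 hj h.symm)
    have hcard : (T p ℓ).card ≤ (T p j).card := by
      rw [T_card p h1, T_card p hj]
    obtain ⟨q, hq, hq2⟩ := exists_not_mem hcard hne
    refine ⟨q, hq, ?_⟩
    rw [act_toSt, if_pos h1, if_neg (fun hc => hq2 hc.2)]

lemma witness_rot {j ℓ : ℕ} (hj : j < L p) (h1 : ¬ ℓ < L p) (h2 : ℓ < L p + M p)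
    (i : Fin (M p)) (hi : i.val = ℓ - L p) (h3 : T p j ≠ C p i) :
    ∃ q ∈ T p j, act p ℓ (toSt p q) = stA p := by
  have hcard : (C p i).card ≤ (T p j).card := by
    rw [card_C, T_card p hj]
  obtain ⟨q, hq, hq2⟩ := exists_not_mem hcard h3
  refine ⟨q, hq, ?_⟩
  rw [act_toSt, if_neg h1, dif_pos h2, if_neg]
  intro hmem
  apply hq2
  convert hmem using 2
  exact Fin.ext hi

lemma witness_merge {j ℓ : ℕ} (hj : j < L p) (h2 : ¬ ℓ < L p + M p)
    (h3 : j ≠ L p - 1) :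
    ∃ q ∈ T p j, act p ℓ (toSt p q) = stA p := by
  have hL : 0 < L p := lt_of_lt_of_le (Mpos p) (M_le_L p)
  have hne : T p j ≠ T p (L p - 1) := fun h => h3 (T_inj p hj (by omega) h)
  have hcard : (T p (L p - 1)).card ≤ (T p j).card := by
    rw [T_card p (by omega), T_card p hj]
  obtain ⟨q, hq, hq2⟩ := exists_not_mem hcard hne
  refine ⟨q, hq, ?_⟩
  rw [act_toSt, if_neg (by omega), dif_neg h2, if_neg hq2]

/-! ### lower bound -/

lemma lower_bound : ∀ (w : List (Fin (Ltot p))) (j : ℕ), j < L p →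
    dfaSync (δ p) (V p j) w → L p - j ≤ w.length := by
  intro w
  induction w with
  | nil =>
    intro j hj hs
    simp only [dfaSync, dfaRun] at hs
    rw [card_V p hj] at hs
    have := (K_facts p).1
    omega
  | cons a w ih =>
    intro j hj hs
    have hstep : dfaSync (δ p) ((V p j).image (act p a.val)) w := by
      rw [dfaSync, dfaRun] at hs
      exact hs
    have hℓt : a.val < L p + M p + 1 := a.isLt
    simp only [List.length_cons]
    by_cases h1 : a.val < L p
    · by_cases h2 : a.val = j ∧ j + 1 < L p
      · obtain ⟨h2a, hj1⟩ := h2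
        rw [h2a, V_step_path p hj1] at hstep
        have := ih (j+1) hj1 hstep
        omega
      · obtain ⟨q, hq, ha⟩ := witness_path p hj h1 h2
        have hd := dead_mem p hq ha
        exact ((dead_run p w _ hd.1 hd.2) hstep).elim
    · by_cases h2 : a.val < L p + M p
      · set i : Fin (M p) := ⟨a.val - L p, by have := Mpos p; omega⟩ with hidef
        by_cases h3 : T p j = C p i
        · have hiL : i.val < L p := lt_of_lt_of_le i.isLt (M_le_L p)
          have hji : j = i.val := by
            apply T_inj p hj hiL
            rw [h3, T_small p i.isLt]
          have hLi : L p + i.val = a.val := by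
            have : i.val = a.val - L p := rfl
            omega
          rw [← hLi, V_step_rot p hj h3] at hstep
          have hj' : (i.val + 1) % M p < L p :=
            lt_of_lt_of_le (Nat.mod_lt _ (Mpos p)) (M_le_L p)
          have hlen := ih _ hj' hstep
          have hiM : i.val < M p := i.isLt
          have hmod : (i.val + 1) % M p = if i.val + 1 < M p then i.val + 1 else 0 := by
            rw [mod_cases (by omega)]
            split <;> omega
          split at hmod <;> omega
        · obtain ⟨q, hq, ha⟩ := witness_rot p hj h1 h2 i rfl h3
          have hd := dead_mem p hq ha
          exact ((dead_run p w _ hd.1 hd.2) hstep).elim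
      · by_cases h3 : j = L p - 1
        · have hL : 0 < L p := lt_of_lt_of_le (Mpos p) (M_le_L p)
          omega
        · obtain ⟨q, hq, ha⟩ := witness_merge p hj h2 h3
          have hd := dead_mem p hq ha
          exact ((dead_run p w _ hd.1 hd.2) hstep).elim


/-! ### letters as Fin elements -/

def enc (i : ℕ) : Fin (Ltot p) := ⟨i % (L p + M p + 1), Nat.mod_lt _ (by omega)⟩

lemma enc_val {i : ℕ} (h : i < L p + M p + 1) : (enc p i).val = i := Nat.mod_eq_of_lt h

/-! ### synchronizing word -/

lemma sync_from : ∀ (d j : ℕ), j + d = L p - 1 →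
    dfaRun (δ p) (V p j) ((List.range' j d).map (enc p) ++ [enc p (L p + M p)])
      = {stB p} := by
  intro d
  have hL : 0 < L p := lt_of_lt_of_le (Mpos p) (M_le_L p)
  induction d with
  | zero =>
    intro j hj
    simp only [List.range', List.map_nil, List.nil_append]
    rw [dfaRun_cons, dfaRun_nil]
    have hval : (enc p (L p + M p)).val = L p + M p := enc_val p (by omega)
    have hfun : (fun q => δ p q (enc p (L p + M p))) = act p (L p + M p) := by
      funext q
      show act p (enc p (L p + M p)).val q = _
      rw [hval]
    rw [hfun, show j = L p - 1 from by omega]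
    exact V_step_merge p
  | succ d ih =>
    intro j hj
    rw [List.range'_succ]
    simp only [List.map_cons, List.cons_append]
    rw [dfaRun_cons]
    have hjL : j + 1 < L p := by omega
    have hval : (enc p j).val = j := enc_val p (by omega)
    have hfun : (fun q => δ p q (enc p j)) = act p j := by
      funext q
      show act p (enc p j).val q = _
      rw [hval]
    rw [hfun, V_step_path p hjL]
    exact ih (j+1) (by omega)

lemma sync_exists : dfaSync (δ p) (V p 0)
    ((List.range' 0 (L p - 1)).map (enc p) ++ [enc p (L p + M p)]) := by
  rw [dfaSync, sync_from p (L p - 1) 0 (by omega)]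
  simp

/-! ### transitivity -/

lemma trans_step (q : Fin (M p)) :
    ({toSt p q} : Finset (Fin (p+8))).image (fun s => δ p s (enc p (L p + q.val)))
      = {toSt p (rot p q)} := by
  have hqM : q.val < M p := q.isLt
  rw [Finset.image_singleton]
  have hval : (enc p (L p + q.val)).val = L p + q.val := enc_val p (by omega)
  show ({act p (enc p (L p + q.val)).val (toSt p q)} : Finset (Fin (p+8))) = _
  rw [hval, act_toSt, if_neg (by omega : ¬ (L p + q.val < L p)),
    dif_pos (by omega : L p + q.val < L p + M p), if_pos]
  have he : (⟨L p + q.val - L p, by have := Mpos p; omega⟩ : Fin (M p)) = q :=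
    Fin.ext (by show L p + q.val - L p = q.val; omega)
  rw [he]
  exact mem_C_self p q

lemma reach : ∀ (d : ℕ) (q : Fin (M p)), ∃ w, dfaRun (δ p) {toSt p q} w =
    {toSt p ⟨(q.val + d) % M p, Nat.mod_lt _ (Mpos p)⟩} := by
  intro d
  induction d with
  | zero =>
    intro q
    refine ⟨[], ?_⟩
    rw [dfaRun_nil]
    have : (⟨(q.val + 0) % M p, Nat.mod_lt _ (Mpos p)⟩ : Fin (M p)) = q :=
      Fin.ext (by rw [Nat.add_zero]; exact Nat.mod_eq_of_lt q.isLt)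
    rw [this]
  | succ d ih =>
    intro q
    obtain ⟨w, hw⟩ := ih (rot p q)
    refine ⟨enc p (L p + q.val) :: w, ?_⟩
    rw [dfaRun_cons]
    have himg : (({toSt p q} : Finset (Fin (p+8))).image
        (fun s => δ p s (enc p (L p + q.val)))) = {toSt p (rot p q)} := trans_step p q
    rw [himg, hw]
    have hv : ((rot p q).val + d) % M p = (q.val + (d+1)) % M p := by
      show ((q.val + 1) % M p + d) % M p = _
      rw [Nat.mod_add_mod]
      congr 1
      omega
    exact congrArg _ (congrArg (toSt p) (Fin.ext hv))

lemma reach_all (q q' : Fin (M p)) : ∃ w, dfaRun (δ p) {toSt p q} w = {toSt p q'} := by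
  obtain ⟨w, hw⟩ := reach p ((q'.val + M p - q.val) % M p) q
  refine ⟨w, ?_⟩
  rw [hw]
  have hq := q.isLt
  have hq' := q'.isLt
  have hv : (q.val + (q'.val + M p - q.val) % M p) % M p = q'.val := by
    rw [Nat.add_mod_mod, show q.val + (q'.val + M p - q.val) = q'.val + M p from by omega,
      Nat.add_mod_right]
    exact Nat.mod_eq_of_lt hq'
  exact congrArg _ (congrArg (toSt p) (Fin.ext hv))

/-! ### sinks -/

lemma sink_A : dfaSink (δ p) (stA p) := fun a => act_stA p _
lemma sink_B : dfaSink (δ p) (stB p) := fun a => act_stB p _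

lemma not_sink_real {q : Fin (p+8)} (h : q.val < p + 6) : ¬ dfaSink (δ p) q := by
  intro hs
  have hq : q = toSt p ⟨q.val, h⟩ := Fin.ext rfl
  have h2 : act p (enc p (L p + M p)).val (toSt p ⟨q.val, h⟩) = q := by
    rw [← hq]
    exact hs (enc p (L p + M p))
  rw [enc_val p (by omega), act_toSt, if_neg (by omega : ¬ (L p + M p < L p)),
    dif_neg (by omega : ¬ (L p + M p < L p + M p))] at h2
  have h6 : (stA p).val = p + 6 := rfl
  have h7 : (stB p).val = p + 7 := rfl
  split at h2 <;> [skip; skip] <;>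
  · have := congrArg Fin.val h2
    omega

lemma sinks_card : (Finset.univ.filter fun q => dfaSink (δ p) q).card ≤ 2 := by
  have hsub : (Finset.univ.filter fun q => dfaSink (δ p) q) ⊆ {stA p, stB p} := by
    intro q hq
    rw [Finset.mem_filter] at hq
    by_cases h : q.val < p + 6
    · exact absurd hq.2 (not_sink_real p h)
    · have hlt : q.val < p + 8 := q.isLt
      simp only [Finset.mem_insert, Finset.mem_singleton]
      rcases (by omega : q.val = p + 6 ∨ q.val = p + 7) with h | h
      · exact Or.inl (Fin.ext h)
      · exact Or.inr (Fin.ext h)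
  calc (Finset.univ.filter fun q => dfaSink (δ p) q).card
      ≤ ({stA p, stB p} : Finset (Fin (p+8))).card := Finset.card_le_card hsub
    _ ≤ 2 := (Finset.card_insert_le _ _).trans (by simp)

end
end S9

/-! ### arithmetic -/

lemma binom_sq (t : ℕ) (ht : 1 ≤ t) : 16 ^ t ≤ 4 * t * (Nat.centralBinom t)^2 := by
  induction t with
  | zero => omega
  | succ t ih =>
    by_cases h0 : t = 0
    · subst h0
      have : Nat.centralBinom 1 = 2 := by decide
      rw [this]
      norm_num
    · have ih' := ih (by omega)
      have key := Nat.succ_mul_centralBinom_succ t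
      refine Nat.le_of_mul_le_mul_left ?_ (Nat.succ_pos t)
      have expand : (t+1) * (4*(t+1)*(Nat.centralBinom (t+1))^2)
          = 4 * ((t+1)*Nat.centralBinom (t+1))^2 := by ring
      rw [expand, key]
      calc (t+1) * 16^(t+1) = 16 * ((t+1) * 16^t) := by ring
        _ ≤ 16 * ((t+1) * (4*t*(Nat.centralBinom t)^2)) :=
            Nat.mul_le_mul_left _ (Nat.mul_le_mul_left _ ih')
        _ ≤ 4 * (2*(2*t+1)*Nat.centralBinom t)^2 := by nlinarith [sq_nonneg (Nat.centralBinom t)]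


theorem stmt9 :
    ∃ c : ℝ, 0 < c ∧ ∃ n₀ : ℕ, ∀ n : ℕ, n₀ ≤ n →
      ∃ (m : ℕ) (δ : Fin n → Fin m → Fin n) (S : Finset (Fin n)),
        (∃ w, dfaSync δ S w) ∧
        (∀ w, dfaSync δ S w → c * 2 ^ n / Real.sqrt n ≤ (w.length : ℝ)) ∧
        -- at most 2 sink states
        (Finset.univ.filter fun q => dfaSink δ q).card ≤ 2 ∧
        -- transitive on the non-sink states
        (∀ q q' : Fin n, ¬ dfaSink δ q → ¬ dfaSink δ q' →
          ∃ w, dfaRun δ {q} w = {q'}) := by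
  refine ⟨1/16, by norm_num, 8, ?_⟩
  intro n hn
  obtain ⟨p, rfl⟩ : ∃ p, n = p + 8 := ⟨n - 8, by omega⟩
  refine ⟨S9.Ltot p, S9.δ p, S9.V p 0, ⟨_, S9.sync_exists p⟩, ?_, S9.sinks_card p, ?_⟩
  · intro w hw
    have hL0 : 0 < S9.L p := lt_of_lt_of_le (S9.Mpos p) (S9.M_le_L p)
    have hlb := S9.lower_bound p w 0 hL0 hw
    rw [Nat.sub_zero] at hlb
    set t := S9.K p with htdef
    obtain ⟨ht3, ht2, _⟩ := S9.K_facts p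
    have ht5 := S9.K_lb p
    have ht8 := S9.K_ub p
    have hchoose : Nat.centralBinom t ≤ S9.L p := by
      calc Nat.centralBinom t = (2*t).choose t := rfl
        _ ≤ (S9.M p).choose t := Nat.choose_le_choose t ht2
        _ ≤ S9.L p := S9.choose_le_L p
    have hnat : 16 ^ t ≤ 4 * t * (Nat.centralBinom t)^2 := binom_sq t (by omega)
    set B := Nat.centralBinom t with hBdef
    have hBpos : (0:ℝ) ≤ (B:ℝ) := Nat.cast_nonneg _
    have hcastn : (0:ℝ) < ((p+8 : ℕ) : ℝ) := by positivity
    have hs : (0:ℝ) < Real.sqrt ((p+8 : ℕ) : ℝ) := Real.sqrt_pos.2 hcastn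
    have h4 : (4:ℝ)^t ≤ 2 * Real.sqrt (((p+8:ℕ)):ℝ) * B := by
      have e1 : ((4:ℝ)^t)^2 = (16:ℝ)^t := by
        rw [← pow_mul, mul_comm, pow_mul]
        norm_num
      have e2 : (2*Real.sqrt (((p+8:ℕ)):ℝ) * (B:ℝ))^2 = 4*(((p+8:ℕ)):ℝ)*(B:ℝ)^2 := by
        rw [mul_pow, mul_pow, Real.sq_sqrt hcastn.le]
        ring
      have h1 : ((4:ℝ)^t)^2 ≤ (2*Real.sqrt (((p+8:ℕ)):ℝ) * (B:ℝ))^2 := by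
        rw [e1, e2]
        have hc : (16:ℝ)^t ≤ 4*(t:ℝ)*(B:ℝ)^2 := by exact_mod_cast hnat
        have htle : (t:ℝ) ≤ ((p+8:ℕ):ℝ) := by exact_mod_cast ht8
        nlinarith [sq_nonneg ((B:ℝ))]
      calc (4:ℝ)^t = Real.sqrt (((4:ℝ)^t)^2) := (Real.sqrt_sq (by positivity)).symm
        _ ≤ Real.sqrt ((2*Real.sqrt (((p+8:ℕ)):ℝ) * (B:ℝ))^2) := Real.sqrt_le_sqrt h1
        _ = 2*Real.sqrt (((p+8:ℕ)):ℝ) * (B:ℝ) := Real.sqrt_sq (by positivity)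
    have h2n : (2:ℝ)^(p+8) ≤ 8 * (4:ℝ)^t := by
      have e3 : (4:ℝ)^t = 2^(2*t) := by
        rw [pow_mul]
        norm_num
      rw [e3]
      have e4 : (2:ℝ)^(p+8) = 2^(p+5) * 8 := by
        rw [show p+8 = (p+5)+3 from rfl, pow_add]
        norm_num
      rw [e4]
      have h5 := pow_le_pow_right₀ (by norm_num : (1:ℝ) ≤ 2) ht5
      linarith
    have hLw : (S9.L p : ℝ) ≤ (w.length : ℝ) := by exact_mod_cast hlb
    have hBL : (B : ℝ) ≤ (S9.L p : ℝ) := by exact_mod_cast hchoose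
    rw [div_le_iff₀ hs]
    have hfinal : (2:ℝ)^(p+8) ≤ 16 * Real.sqrt (((p+8:ℕ)):ℝ) * (w.length:ℝ) := by
      have hBw : (B:ℝ) ≤ (w.length:ℝ) := hBL.trans hLw
      have h6 : 8 * ((4:ℝ)^t) ≤ 8 * (2 * Real.sqrt (((p+8:ℕ)):ℝ) * B) := by linarith
      have h7 : 16 * Real.sqrt (((p+8:ℕ)):ℝ) * (B:ℝ)
          ≤ 16 * Real.sqrt (((p+8:ℕ)):ℝ) * (w.length:ℝ) := by
        have := Real.sqrt_nonneg (((p+8:ℕ)):ℝ)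
        nlinarith
      calc (2:ℝ)^(p+8) ≤ 8 * (4:ℝ)^t := h2n
        _ ≤ 8 * (2 * Real.sqrt (((p+8:ℕ)):ℝ) * B) := h6
        _ = 16 * Real.sqrt (((p+8:ℕ)):ℝ) * (B:ℝ) := by ring
        _ ≤ _ := h7
    push_cast at hfinal ⊢
    linarith
  · intro q q' hq hq'
    have hreal : ∀ r : Fin (p+8), ¬ dfaSink (S9.δ p) r → r.val < p + 6 := by
      intro r hr
      by_contra h
      have hlt : r.val < p + 8 := r.isLt
      rcases (by omega : r.val = p + 6 ∨ r.val = p + 7) with h | h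
      · exact hr (by rw [show r = S9.stA p from Fin.ext h]; exact S9.sink_A p)
      · exact hr (by rw [show r = S9.stB p from Fin.ext h]; exact S9.sink_B p)
    have hq6 := hreal q hq
    have hq'6 := hreal q' hq'
    obtain ⟨w, hw⟩ := S9.reach_all p ⟨q.val, hq6⟩ ⟨q'.val, hq'6⟩
    refine ⟨w, ?_⟩
    have e1 : S9.toSt p ⟨q.val, hq6⟩ = q := Fin.ext rfl
    have e2 : S9.toSt p ⟨q'.val, hq'6⟩ = q' := Fin.ext rfl
    rw [e1, e2] at hw
    exact hw
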